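/- Let J be a proper nontrivial normal subgroup of a finite group X. Then X is a Frobenius group with kernel J if and only if C_X(j) ≤ J for all nonidentity j ∈ J. -/

import Mathlib

open Pointwise

/-- Fixed-point lemma: a `p`-subgroup acting by conjugation on a finite normal
subgroup whose order is divisible by `p` centralizes some nonidentity element. -/
lemma aux_fixed {X : Type*} [Group X] [Finite X] {p : ℕ} [Fact p.Prime]
    (J : Subgroup X) (P : Subgroup X) [J.Normal] (hP : IsPGroup p P)
    (hd : p ∣ Nat.card J) :
    ∃ z : X, z ∈ J ∧ z ≠ 1 ∧ ∀ g ∈ P, g * z * g⁻¹ = z := by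
  letI : MulAction P J :=
    MulAction.compHom _ ((MulAut.conjNormal (H := J)).comp P.subtype)
  have h1 : (1 : J) ∈ MulAction.fixedPoints P J := by
    intro g
    show MulAut.conjNormal ((P.subtype g : X)) (1 : J) = 1
    exact map_one _
  obtain ⟨b, hb, hne⟩ := hP.exists_fixed_point_of_prime_dvd_card_of_fixed_point J hd h1
  refine ⟨(b : X), b.2, ?_, ?_⟩
  · intro h
    exact hne (Subtype.ext h.symm)
  · intro g hg
    have := hb ⟨g, hg⟩
    have h2 : MulAut.conjNormal g b = b := this
    have := congrArg Subtype.val h2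
    simpa [MulAut.conjNormal_apply] using this

theorem stmt3 {X : Type*} [Group X] [Finite X] (J : Subgroup X)
    (hJn : J.Normal) (hJbot : J ≠ ⊥) (hJtop : J ≠ ⊤) :
    ((∃ H : Subgroup X, J ⊓ H = ⊥ ∧ J ⊔ H = ⊤ ∧
        ∀ g : X, g ∉ H → ∀ x : X, x ∈ H → g * x * g⁻¹ ∈ H → x = 1) ↔
      ∀ j : X, j ∈ J → j ≠ 1 → Subgroup.centralizer {j} ≤ J) := by
  haveI := hJn
  constructor
  · rintro ⟨H, hinf, hsup, hmal⟩ j hjJ hj1 c hc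
    by_contra hcJ
    have hJH : ∀ x : X, x ∈ J → x ∈ H → x = 1 := by
      intro x h1 h2
      have : x ∈ J ⊓ H := ⟨h1, h2⟩
      rw [hinf] at this
      exact this
    have hdisj : Disjoint J H := disjoint_iff.mpr hinf
    have hmul : (J : Set X) * (H : Set X) = Set.univ := by
      rw [← Subgroup.normal_mul, hsup, Subgroup.coe_top]
    have hcompl : Subgroup.IsComplement' J H :=
      Subgroup.isComplement'_of_disjoint_and_mul_eq_univ hdisj hmul
    have hindex : J.index = Nat.card H := hcompl.symm.index_eq_card
    -- coprimality
    have hcop : ∀ p : ℕ, p.Prime → p ∣ Nat.card H → ¬ p ∣ Nat.card J := by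
      intro p hp hpH hpJ
      haveI : Fact p.Prime := ⟨hp⟩
      obtain ⟨h, hh⟩ := exists_prime_orderOf_dvd_card' (G := H) p hpH
      have hhX : orderOf (h : X) = p := (orderOf_injective H.subtype H.subtype_injective h).trans hh
      have hhP : IsPGroup p (Subgroup.zpowers (h : X)) :=
        IsPGroup.of_card (by rw [Nat.card_zpowers, hhX, pow_one])
      obtain ⟨z, hzJ, hz1, hz⟩ := aux_fixed J _ hhP hpJ
      have hcomm := hz (h : X) (Subgroup.mem_zpowers _)
      have hzH : z ∉ H := fun hzH => hz1 (hJH z hzJ hzH)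
      have hcomm2 : (h : X) * z = z * (h : X) := by
        rwa [mul_inv_eq_iff_eq_mul] at hcomm
      have hcomm' : z * (h : X) * z⁻¹ = (h : X) := by
        rw [← hcomm2]; group
      have h1 : (h : X) = 1 := hmal z hzH (h : X) h.2 (by rw [hcomm']; exact h.2)
      rw [h1, orderOf_one] at hhX
      exact hp.one_lt.ne' hhX.symm
    have hKJ : ¬ Subgroup.centralizer {j} ≤ J := fun hle => hcJ (hle hc)
    have hrel : J.relIndex (Subgroup.centralizer {j}) ≠ 1 := by rwa [Ne, Subgroup.relIndex_eq_one]
    obtain ⟨p, hp, hpd⟩ := Nat.exists_prime_and_dvd hrel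
    haveI : Fact p.Prime := ⟨hp⟩
    have hpH : p ∣ Nat.card H :=
      hindex ▸ hpd.trans (Subgroup.relIndex_dvd_index_of_normal J (Subgroup.centralizer {j}))
    have hpK : p ∣ Nat.card (Subgroup.centralizer {j}) := hpd.trans (Subgroup.index_dvd_card (J.subgroupOf (Subgroup.centralizer {j})))
    have hpJ : ¬ p ∣ Nat.card J := hcop p hp hpH
    obtain ⟨u, hu⟩ := exists_prime_orderOf_dvd_card' (G := (Subgroup.centralizer {j})) p hpK
    have huX : orderOf (u : X) = p := (orderOf_injective (Subgroup.centralizer {j}).subtype (Subgroup.centralizer {j}).subtype_injective u).trans hu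
    have hu1 : (u : X) ≠ 1 := by
      intro h
      rw [h, orderOf_one] at huX
      exact hp.one_lt.ne' huX.symm
    have huJ : (u : X) ∉ J := by
      intro huJ
      refine hpJ ?_
      have : orderOf (⟨(u : X), huJ⟩ : J) = p :=
        (orderOf_injective J.subtype J.subtype_injective _).symm.trans huX
      exact this ▸ orderOf_dvd_natCard _
    -- Sylow argument: u lies in a conjugate of H
    have hupg : IsPGroup p (Subgroup.zpowers (u : X)) :=
      IsPGroup.of_card (by rw [Nat.card_zpowers, huX, pow_one])
    obtain ⟨Q, hQ⟩ := hupg.exists_le_sylow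
    obtain ⟨R⟩ := (Sylow.nonempty : Nonempty (Sylow p H))
    set R' : Subgroup X := (R : Subgroup H).map H.subtype with hR'
    have hR'pg : IsPGroup p R' := R.2.map H.subtype
    obtain ⟨Q', hQ'⟩ := hR'pg.exists_le_sylow
    have hcardR' : Nat.card R' = p ^ (Nat.card H).factorization p := by
      rw [← Nat.card_congr ((R : Subgroup H).equivMapOfInjective H.subtype
        H.subtype_injective).toEquiv]
      exact R.card_eq_multiplicity
    have hcardX : Nat.card J * Nat.card H = Nat.card X := hcompl.card_mul
    have hfact : (Nat.card X).factorization p = (Nat.card H).factorization p := by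
      rw [← hcardX, Nat.factorization_mul Nat.card_pos.ne' Nat.card_pos.ne']
      simp [Nat.factorization_eq_zero_of_not_dvd hpJ]
    have hcardQ' : Nat.card Q' = Nat.card R' := by
      rw [Q'.card_eq_multiplicity, hcardR', hfact]
    have hQ'R' : R' = (Q' : Subgroup X) :=
      Subgroup.eq_of_le_of_card_ge hQ' hcardQ'.le
    have hQ'H : (Q' : Subgroup X) ≤ H := by
      rw [← hQ'R']
      exact Subgroup.map_subtype_le _
    obtain ⟨g, hg⟩ := MulAction.exists_smul_eq X Q' Q
    have huQ : (u : X) ∈ Q := hQ (Subgroup.mem_zpowers _)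
    have huQ' : g⁻¹ * (u : X) * g ∈ Q' := by
      rw [← hg, Sylow.smul_def] at huQ
      have := Subgroup.mem_pointwise_smul_iff_inv_smul_mem.mp huQ
      have h' : g⁻¹ * (u : X) * g ∈ (Q' : Subgroup X) := by simpa [MulAut.smul_def] using this
      exact h'
    set v : X := g⁻¹ * (u : X) * g with hv
    have hvH : v ∈ H := hQ'H huQ'
    have hv1 : v ≠ 1 := by
      intro h
      apply hu1
      have : (u : X) = g * v * g⁻¹ := by rw [hv]; group
      rw [this, h]; group
    set j' : X := g⁻¹ * j * g with hj'
    have hj'J : j' ∈ J := by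
      have := hJn.conj_mem j hjJ g⁻¹
      simpa using this
    have hj'1 : j' ≠ 1 := by
      intro h
      apply hj1
      have : j = g * j' * g⁻¹ := by rw [hj']; group
      rw [this, h]; group
    have hj'H : j' ∉ H := fun hmem => hj'1 (hJH j' hj'J hmem)
    have hcomm : (u : X) * j = j * (u : X) :=
      Subgroup.mem_centralizer_singleton_iff.mp
        (show (u : X) ∈ Subgroup.centralizer {j} from u.2)
    have hjuj : j * (u : X) * j⁻¹ = (u : X) := by rw [← hcomm]; group
    have hconj : j' * v * j'⁻¹ = v := by
      calc j' * v * j'⁻¹ = g⁻¹ * (j * (u : X) * j⁻¹) * g := by rw [hj', hv]; group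
        _ = g⁻¹ * (u : X) * g := by rw [hjuj]
        _ = v := hv.symm
    exact hv1 (hmal j' hj'H v hvH (by rw [hconj]; exact hvH))
  · intro hcent
    have hcop : Nat.Coprime (Nat.card J) J.index := by
      rw [Nat.coprime_iff_gcd_eq_one]
      by_contra hne
      obtain ⟨p, hp, hpd⟩ := Nat.exists_prime_and_dvd hne
      haveI : Fact p.Prime := ⟨hp⟩
      have hpJ : p ∣ Nat.card J := hpd.trans (Nat.gcd_dvd_left _ _)
      have hpI : p ∣ J.index := hpd.trans (Nat.gcd_dvd_right _ _)
      obtain ⟨P⟩ := (Sylow.nonempty : Nonempty (Sylow p X))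
      obtain ⟨z, hzJ, hz1, hz⟩ := aux_fixed J P P.2 hpJ
      have hPle : (P : Subgroup X) ≤ Subgroup.centralizer {z} := by
        intro g hg
        rw [Subgroup.mem_centralizer_singleton_iff]
        have := hz g hg
        rw [mul_inv_eq_iff_eq_mul] at this
        exact this
      have hPJ : (P : Subgroup X) ≤ J := hPle.trans (hcent z hzJ hz1)
      have hdvd : J.index ∣ (P : Subgroup X).index := Subgroup.index_dvd_of_le hPJ
      exact P.not_dvd_index (hpI.trans hdvd)
    obtain ⟨H, hH⟩ := Subgroup.exists_right_complement'_of_coprime hcop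
    refine ⟨H, disjoint_iff.mp hH.disjoint, hH.sup_eq_top, ?_⟩
    intro g hgH x hxH hconj
    by_contra hx1
    have hg_mem : g ∈ (J : Set X) * (H : Set X) := by
      rw [← Subgroup.normal_mul, hH.sup_eq_top, Subgroup.coe_top]
      trivial
    obtain ⟨a, haJ, h, hhH, hg⟩ := Set.mem_mul.mp hg_mem
    set y : X := h * x * h⁻¹ with hy
    have hyH : y ∈ H := H.mul_mem (H.mul_mem hhH hxH) (H.inv_mem hhH)
    have hy1 : y ≠ 1 := by
      intro hy1
      apply hx1
      have : x = h⁻¹ * y * h := by rw [hy]; group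
      rw [this, hy1]; group
    have hgxg : g * x * g⁻¹ = a * y * a⁻¹ := by
      rw [← hg, hy]; group
    have hmem : (a * y * a⁻¹) * y⁻¹ ∈ J ⊓ H := by
      constructor
      · have h1 : y * a⁻¹ * y⁻¹ ∈ J := hJn.conj_mem a⁻¹ (J.inv_mem haJ) y
        have : (a * y * a⁻¹) * y⁻¹ = a * (y * a⁻¹ * y⁻¹) := by group
        rw [this]
        exact J.mul_mem haJ h1
      · exact H.mul_mem (hgxg ▸ hconj) (H.inv_mem hyH)
    rw [disjoint_iff.mp hH.disjoint, Subgroup.mem_bot] at hmem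
    have hcomm : a * y * a⁻¹ = y := by
      rwa [mul_inv_eq_one] at hmem
    rcases eq_or_ne a 1 with ha | ha
    · apply hgH
      rw [← hg, ha, one_mul]
      exact hhH
    · have hyc : y ∈ Subgroup.centralizer {a} := by
        rw [Subgroup.mem_centralizer_singleton_iff]
        rw [mul_inv_eq_iff_eq_mul] at hcomm
        exact hcomm.symm
      have hyJ : y ∈ J := hcent a haJ ha hyc
      apply hy1
      have : y ∈ J ⊓ H := ⟨hyJ, hyH⟩
      rwa [disjoint_iff.mp hH.disjoint, Subgroup.mem_bot] at this
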